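/- Let A_2^1 be the 6-element monoid obtained by adjoining an identity to the semigroup ⟨a, b | aba = a, bab = b, a² = 0, b² = b⟩. Then every identity satisfied by A_2^1 is satisfied by B_2^1; that is, the variety generated by B_2^1 is contained in the variety generated by A_2^1. Concretely, B_2^1 is isomorphic to a subquotient (divisor) of a finite direct power of A_2^1; it suffices to exhibit B_2^1 as a homomorphic image of a submonoid of A_2^1 × A_2^1. -/

import Mathlib

/-- The 6-element Brandt monoid `B₂¹` realized as a set of `2×2` matrices over `ℚ`. -/
def B21 : Set (Matrix (Fin 2) (Fin 2) ℚ) :=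
  {0, Matrix.single 0 0 1, Matrix.single 0 1 1,
   Matrix.single 1 0 1, Matrix.single 1 1 1, 1}

/-- The 6-element monoid `A₂¹` realized as a set of `2×2` matrices over `ℚ`:
with `a := E₁₂` and `b := !![0,0; 1,1]` one has `aba = a`, `bab = b`, `a² = 0`, `b² = b`;
the elements are `0`, `a`, `b`, `ab`, `ba` and the identity. -/
def A21 : Set (Matrix (Fin 2) (Fin 2) ℚ) :=
  {0, !![(0:ℚ), 1; 0, 0], !![(0:ℚ), 0; 1, 1], !![(1:ℚ), 1; 0, 0], !![(0:ℚ), 0; 0, 1], 1}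

namespace B21A21Aux

abbrev M := Matrix (Fin 2) (Fin 2) ℚ

theorem mne {x y : M} (i j : Fin 2) (h : x i j ≠ y i j) : x ≠ y :=
  fun e => h (by rw [e])

theorem pne1 {x y : M × M} (i j : Fin 2) (h : x.1 i j ≠ y.1 i j) : x ≠ y :=
  fun e => h (by rw [e])

theorem pne2 {x y : M × M} (i j : Fin 2) (h : x.2 i j ≠ y.2 i j) : x ≠ y :=
  fun e => h (by rw [e])

theorem fst_mk (x y : M) : (x, y).1 = x := rfl

theorem snd_mk (x y : M) : (x, y).2 = y := rfl

theorem zero_fin_two : (0 : M) = !![(0:ℚ), 0; 0, 0] := by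
  ext i j; fin_cases i <;> fin_cases j <;> simp

theorem zero_fin_two' : (!![(0:ℚ), 0; 0, 0] : M) = 0 := zero_fin_two.symm

theorem one_fin_two' : (!![(1:ℚ), 0; 0, 1] : M) = 1 := Matrix.one_fin_two.symm

theorem std00 : (Matrix.single 0 0 1 : M) = !![(1:ℚ), 0; 0, 0] := by
  ext i j; fin_cases i <;> fin_cases j <;> simp [Matrix.single]

theorem std01 : (Matrix.single 0 1 1 : M) = !![(0:ℚ), 1; 0, 0] := by
  ext i j; fin_cases i <;> fin_cases j <;> simp [Matrix.single]

theorem std10 : (Matrix.single 1 0 1 : M) = !![(0:ℚ), 0; 1, 0] := by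
  ext i j; fin_cases i <;> fin_cases j <;> simp [Matrix.single]

theorem std11 : (Matrix.single 1 1 1 : M) = !![(0:ℚ), 0; 0, 1] := by
  ext i j; fin_cases i <;> fin_cases j <;> simp [Matrix.single]

/-- The section `σ : B₂¹ → A₂¹ × A₂¹`. -/
noncomputable def σ (x : M) : M × M :=
  if x = !![(1:ℚ), 0; 0, 0] then (!![(1:ℚ), 1; 0, 0], !![(0:ℚ), 0; 0, 1])
  else if x = !![(0:ℚ), 1; 0, 0] then (!![(0:ℚ), 1; 0, 0], !![(0:ℚ), 0; 1, 1])
  else if x = !![(0:ℚ), 0; 1, 0] then (!![(0:ℚ), 0; 1, 1], !![(0:ℚ), 1; 0, 0])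
  else if x = !![(0:ℚ), 0; 0, 1] then (!![(0:ℚ), 0; 0, 1], !![(1:ℚ), 1; 0, 0])
  else if x = !![(1:ℚ), 0; 0, 1] then (!![(1:ℚ), 0; 0, 1], !![(1:ℚ), 0; 0, 1])
  else (!![(0:ℚ), 0; 0, 0], !![(0:ℚ), 0; 0, 0])

/-- The projection `π` from the submonoid `T ≤ A₂¹ × A₂¹` onto `B₂¹`. -/
noncomputable def π (p : M × M) : M :=
  if p = (!![(1:ℚ), 1; 0, 0], !![(0:ℚ), 0; 0, 1]) then !![(1:ℚ), 0; 0, 0]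
  else if p = (!![(0:ℚ), 1; 0, 0], !![(0:ℚ), 0; 1, 1]) then !![(0:ℚ), 1; 0, 0]
  else if p = (!![(0:ℚ), 0; 1, 1], !![(0:ℚ), 1; 0, 0]) then !![(0:ℚ), 0; 1, 0]
  else if p = (!![(0:ℚ), 0; 0, 1], !![(1:ℚ), 1; 0, 0]) then !![(0:ℚ), 0; 0, 1]
  else if p = (!![(1:ℚ), 0; 0, 1], !![(1:ℚ), 0; 0, 1]) then !![(1:ℚ), 0; 0, 1]
  else !![(0:ℚ), 0; 0, 0]

/-- The 14-element submonoid `T` of `A₂¹ × A₂¹`. -/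
def T : Set (M × M) :=
  {(!![(1:ℚ), 0; 0, 1], !![(1:ℚ), 0; 0, 1]),
   (!![(0:ℚ), 1; 0, 0], !![(0:ℚ), 0; 1, 1]),
   (!![(0:ℚ), 0; 1, 1], !![(0:ℚ), 1; 0, 0]),
   (!![(0:ℚ), 0; 0, 1], !![(1:ℚ), 1; 0, 0]),
   (!![(1:ℚ), 1; 0, 0], !![(0:ℚ), 0; 0, 1]),
   (!![(0:ℚ), 0; 1, 1], !![(0:ℚ), 0; 0, 0]),
   (!![(0:ℚ), 0; 0, 1], !![(0:ℚ), 0; 0, 0]),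
   (!![(0:ℚ), 0; 0, 0], !![(0:ℚ), 0; 0, 0]),
   (!![(0:ℚ), 0; 0, 0], !![(1:ℚ), 1; 0, 0]),
   (!![(0:ℚ), 0; 0, 0], !![(0:ℚ), 1; 0, 0]),
   (!![(0:ℚ), 0; 0, 0], !![(0:ℚ), 0; 1, 1]),
   (!![(1:ℚ), 1; 0, 0], !![(0:ℚ), 0; 0, 0]),
   (!![(0:ℚ), 1; 0, 0], !![(0:ℚ), 0; 0, 0]),
   (!![(0:ℚ), 0; 0, 0], !![(0:ℚ), 0; 0, 1])}

theorem mul0_0 : !![(0:ℚ), 0; 0, 0] * !![(0:ℚ), 0; 0, 0] = !![(0:ℚ), 0; 0, 0] := by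
  ext i j; fin_cases i <;> fin_cases j <;> norm_num [Matrix.mul_apply, Fin.sum_univ_two]

theorem mul0_1 : !![(0:ℚ), 0; 0, 0] * !![(0:ℚ), 0; 0, 1] = !![(0:ℚ), 0; 0, 0] := by
  ext i j; fin_cases i <;> fin_cases j <;> norm_num [Matrix.mul_apply, Fin.sum_univ_two]

theorem mul0_2 : !![(0:ℚ), 0; 0, 0] * !![(0:ℚ), 0; 1, 0] = !![(0:ℚ), 0; 0, 0] := by
  ext i j; fin_cases i <;> fin_cases j <;> norm_num [Matrix.mul_apply, Fin.sum_univ_two]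

theorem mul0_3 : !![(0:ℚ), 0; 0, 0] * !![(0:ℚ), 0; 1, 1] = !![(0:ℚ), 0; 0, 0] := by
  ext i j; fin_cases i <;> fin_cases j <;> norm_num [Matrix.mul_apply, Fin.sum_univ_two]

theorem mul0_4 : !![(0:ℚ), 0; 0, 0] * !![(0:ℚ), 1; 0, 0] = !![(0:ℚ), 0; 0, 0] := by
  ext i j; fin_cases i <;> fin_cases j <;> norm_num [Matrix.mul_apply, Fin.sum_univ_two]

theorem mul0_5 : !![(0:ℚ), 0; 0, 0] * !![(1:ℚ), 0; 0, 0] = !![(0:ℚ), 0; 0, 0] := by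
  ext i j; fin_cases i <;> fin_cases j <;> norm_num [Matrix.mul_apply, Fin.sum_univ_two]

theorem mul0_6 : !![(0:ℚ), 0; 0, 0] * !![(1:ℚ), 0; 0, 1] = !![(0:ℚ), 0; 0, 0] := by
  ext i j; fin_cases i <;> fin_cases j <;> norm_num [Matrix.mul_apply, Fin.sum_univ_two]

theorem mul0_7 : !![(0:ℚ), 0; 0, 0] * !![(1:ℚ), 1; 0, 0] = !![(0:ℚ), 0; 0, 0] := by
  ext i j; fin_cases i <;> fin_cases j <;> norm_num [Matrix.mul_apply, Fin.sum_univ_two]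

theorem mul1_0 : !![(0:ℚ), 0; 0, 1] * !![(0:ℚ), 0; 0, 0] = !![(0:ℚ), 0; 0, 0] := by
  ext i j; fin_cases i <;> fin_cases j <;> norm_num [Matrix.mul_apply, Fin.sum_univ_two]

theorem mul1_1 : !![(0:ℚ), 0; 0, 1] * !![(0:ℚ), 0; 0, 1] = !![(0:ℚ), 0; 0, 1] := by
  ext i j; fin_cases i <;> fin_cases j <;> norm_num [Matrix.mul_apply, Fin.sum_univ_two]

theorem mul1_2 : !![(0:ℚ), 0; 0, 1] * !![(0:ℚ), 0; 1, 0] = !![(0:ℚ), 0; 1, 0] := by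
  ext i j; fin_cases i <;> fin_cases j <;> norm_num [Matrix.mul_apply, Fin.sum_univ_two]

theorem mul1_3 : !![(0:ℚ), 0; 0, 1] * !![(0:ℚ), 0; 1, 1] = !![(0:ℚ), 0; 1, 1] := by
  ext i j; fin_cases i <;> fin_cases j <;> norm_num [Matrix.mul_apply, Fin.sum_univ_two]

theorem mul1_4 : !![(0:ℚ), 0; 0, 1] * !![(0:ℚ), 1; 0, 0] = !![(0:ℚ), 0; 0, 0] := by
  ext i j; fin_cases i <;> fin_cases j <;> norm_num [Matrix.mul_apply, Fin.sum_univ_two]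

theorem mul1_5 : !![(0:ℚ), 0; 0, 1] * !![(1:ℚ), 0; 0, 0] = !![(0:ℚ), 0; 0, 0] := by
  ext i j; fin_cases i <;> fin_cases j <;> norm_num [Matrix.mul_apply, Fin.sum_univ_two]

theorem mul1_6 : !![(0:ℚ), 0; 0, 1] * !![(1:ℚ), 0; 0, 1] = !![(0:ℚ), 0; 0, 1] := by
  ext i j; fin_cases i <;> fin_cases j <;> norm_num [Matrix.mul_apply, Fin.sum_univ_two]

theorem mul1_7 : !![(0:ℚ), 0; 0, 1] * !![(1:ℚ), 1; 0, 0] = !![(0:ℚ), 0; 0, 0] := by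
  ext i j; fin_cases i <;> fin_cases j <;> norm_num [Matrix.mul_apply, Fin.sum_univ_two]

theorem mul2_0 : !![(0:ℚ), 0; 1, 0] * !![(0:ℚ), 0; 0, 0] = !![(0:ℚ), 0; 0, 0] := by
  ext i j; fin_cases i <;> fin_cases j <;> norm_num [Matrix.mul_apply, Fin.sum_univ_two]

theorem mul2_1 : !![(0:ℚ), 0; 1, 0] * !![(0:ℚ), 0; 0, 1] = !![(0:ℚ), 0; 0, 0] := by
  ext i j; fin_cases i <;> fin_cases j <;> norm_num [Matrix.mul_apply, Fin.sum_univ_two]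

theorem mul2_2 : !![(0:ℚ), 0; 1, 0] * !![(0:ℚ), 0; 1, 0] = !![(0:ℚ), 0; 0, 0] := by
  ext i j; fin_cases i <;> fin_cases j <;> norm_num [Matrix.mul_apply, Fin.sum_univ_two]

theorem mul2_3 : !![(0:ℚ), 0; 1, 0] * !![(0:ℚ), 0; 1, 1] = !![(0:ℚ), 0; 0, 0] := by
  ext i j; fin_cases i <;> fin_cases j <;> norm_num [Matrix.mul_apply, Fin.sum_univ_two]

theorem mul2_4 : !![(0:ℚ), 0; 1, 0] * !![(0:ℚ), 1; 0, 0] = !![(0:ℚ), 0; 0, 1] := by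
  ext i j; fin_cases i <;> fin_cases j <;> norm_num [Matrix.mul_apply, Fin.sum_univ_two]

theorem mul2_5 : !![(0:ℚ), 0; 1, 0] * !![(1:ℚ), 0; 0, 0] = !![(0:ℚ), 0; 1, 0] := by
  ext i j; fin_cases i <;> fin_cases j <;> norm_num [Matrix.mul_apply, Fin.sum_univ_two]

theorem mul2_6 : !![(0:ℚ), 0; 1, 0] * !![(1:ℚ), 0; 0, 1] = !![(0:ℚ), 0; 1, 0] := by
  ext i j; fin_cases i <;> fin_cases j <;> norm_num [Matrix.mul_apply, Fin.sum_univ_two]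

theorem mul2_7 : !![(0:ℚ), 0; 1, 0] * !![(1:ℚ), 1; 0, 0] = !![(0:ℚ), 0; 1, 1] := by
  ext i j; fin_cases i <;> fin_cases j <;> norm_num [Matrix.mul_apply, Fin.sum_univ_two]

theorem mul3_0 : !![(0:ℚ), 0; 1, 1] * !![(0:ℚ), 0; 0, 0] = !![(0:ℚ), 0; 0, 0] := by
  ext i j; fin_cases i <;> fin_cases j <;> norm_num [Matrix.mul_apply, Fin.sum_univ_two]

theorem mul3_1 : !![(0:ℚ), 0; 1, 1] * !![(0:ℚ), 0; 0, 1] = !![(0:ℚ), 0; 0, 1] := by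
  ext i j; fin_cases i <;> fin_cases j <;> norm_num [Matrix.mul_apply, Fin.sum_univ_two]

theorem mul3_2 : !![(0:ℚ), 0; 1, 1] * !![(0:ℚ), 0; 1, 0] = !![(0:ℚ), 0; 1, 0] := by
  ext i j; fin_cases i <;> fin_cases j <;> norm_num [Matrix.mul_apply, Fin.sum_univ_two]

theorem mul3_3 : !![(0:ℚ), 0; 1, 1] * !![(0:ℚ), 0; 1, 1] = !![(0:ℚ), 0; 1, 1] := by
  ext i j; fin_cases i <;> fin_cases j <;> norm_num [Matrix.mul_apply, Fin.sum_univ_two]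

theorem mul3_4 : !![(0:ℚ), 0; 1, 1] * !![(0:ℚ), 1; 0, 0] = !![(0:ℚ), 0; 0, 1] := by
  ext i j; fin_cases i <;> fin_cases j <;> norm_num [Matrix.mul_apply, Fin.sum_univ_two]

theorem mul3_5 : !![(0:ℚ), 0; 1, 1] * !![(1:ℚ), 0; 0, 0] = !![(0:ℚ), 0; 1, 0] := by
  ext i j; fin_cases i <;> fin_cases j <;> norm_num [Matrix.mul_apply, Fin.sum_univ_two]

theorem mul3_6 : !![(0:ℚ), 0; 1, 1] * !![(1:ℚ), 0; 0, 1] = !![(0:ℚ), 0; 1, 1] := by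
  ext i j; fin_cases i <;> fin_cases j <;> norm_num [Matrix.mul_apply, Fin.sum_univ_two]

theorem mul3_7 : !![(0:ℚ), 0; 1, 1] * !![(1:ℚ), 1; 0, 0] = !![(0:ℚ), 0; 1, 1] := by
  ext i j; fin_cases i <;> fin_cases j <;> norm_num [Matrix.mul_apply, Fin.sum_univ_two]

theorem mul4_0 : !![(0:ℚ), 1; 0, 0] * !![(0:ℚ), 0; 0, 0] = !![(0:ℚ), 0; 0, 0] := by
  ext i j; fin_cases i <;> fin_cases j <;> norm_num [Matrix.mul_apply, Fin.sum_univ_two]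

theorem mul4_1 : !![(0:ℚ), 1; 0, 0] * !![(0:ℚ), 0; 0, 1] = !![(0:ℚ), 1; 0, 0] := by
  ext i j; fin_cases i <;> fin_cases j <;> norm_num [Matrix.mul_apply, Fin.sum_univ_two]

theorem mul4_2 : !![(0:ℚ), 1; 0, 0] * !![(0:ℚ), 0; 1, 0] = !![(1:ℚ), 0; 0, 0] := by
  ext i j; fin_cases i <;> fin_cases j <;> norm_num [Matrix.mul_apply, Fin.sum_univ_two]

theorem mul4_3 : !![(0:ℚ), 1; 0, 0] * !![(0:ℚ), 0; 1, 1] = !![(1:ℚ), 1; 0, 0] := by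
  ext i j; fin_cases i <;> fin_cases j <;> norm_num [Matrix.mul_apply, Fin.sum_univ_two]

theorem mul4_4 : !![(0:ℚ), 1; 0, 0] * !![(0:ℚ), 1; 0, 0] = !![(0:ℚ), 0; 0, 0] := by
  ext i j; fin_cases i <;> fin_cases j <;> norm_num [Matrix.mul_apply, Fin.sum_univ_two]

theorem mul4_5 : !![(0:ℚ), 1; 0, 0] * !![(1:ℚ), 0; 0, 0] = !![(0:ℚ), 0; 0, 0] := by
  ext i j; fin_cases i <;> fin_cases j <;> norm_num [Matrix.mul_apply, Fin.sum_univ_two]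

theorem mul4_6 : !![(0:ℚ), 1; 0, 0] * !![(1:ℚ), 0; 0, 1] = !![(0:ℚ), 1; 0, 0] := by
  ext i j; fin_cases i <;> fin_cases j <;> norm_num [Matrix.mul_apply, Fin.sum_univ_two]

theorem mul4_7 : !![(0:ℚ), 1; 0, 0] * !![(1:ℚ), 1; 0, 0] = !![(0:ℚ), 0; 0, 0] := by
  ext i j; fin_cases i <;> fin_cases j <;> norm_num [Matrix.mul_apply, Fin.sum_univ_two]

theorem mul5_0 : !![(1:ℚ), 0; 0, 0] * !![(0:ℚ), 0; 0, 0] = !![(0:ℚ), 0; 0, 0] := by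
  ext i j; fin_cases i <;> fin_cases j <;> norm_num [Matrix.mul_apply, Fin.sum_univ_two]

theorem mul5_1 : !![(1:ℚ), 0; 0, 0] * !![(0:ℚ), 0; 0, 1] = !![(0:ℚ), 0; 0, 0] := by
  ext i j; fin_cases i <;> fin_cases j <;> norm_num [Matrix.mul_apply, Fin.sum_univ_two]

theorem mul5_2 : !![(1:ℚ), 0; 0, 0] * !![(0:ℚ), 0; 1, 0] = !![(0:ℚ), 0; 0, 0] := by
  ext i j; fin_cases i <;> fin_cases j <;> norm_num [Matrix.mul_apply, Fin.sum_univ_two]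

theorem mul5_3 : !![(1:ℚ), 0; 0, 0] * !![(0:ℚ), 0; 1, 1] = !![(0:ℚ), 0; 0, 0] := by
  ext i j; fin_cases i <;> fin_cases j <;> norm_num [Matrix.mul_apply, Fin.sum_univ_two]

theorem mul5_4 : !![(1:ℚ), 0; 0, 0] * !![(0:ℚ), 1; 0, 0] = !![(0:ℚ), 1; 0, 0] := by
  ext i j; fin_cases i <;> fin_cases j <;> norm_num [Matrix.mul_apply, Fin.sum_univ_two]

theorem mul5_5 : !![(1:ℚ), 0; 0, 0] * !![(1:ℚ), 0; 0, 0] = !![(1:ℚ), 0; 0, 0] := by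
  ext i j; fin_cases i <;> fin_cases j <;> norm_num [Matrix.mul_apply, Fin.sum_univ_two]

theorem mul5_6 : !![(1:ℚ), 0; 0, 0] * !![(1:ℚ), 0; 0, 1] = !![(1:ℚ), 0; 0, 0] := by
  ext i j; fin_cases i <;> fin_cases j <;> norm_num [Matrix.mul_apply, Fin.sum_univ_two]

theorem mul5_7 : !![(1:ℚ), 0; 0, 0] * !![(1:ℚ), 1; 0, 0] = !![(1:ℚ), 1; 0, 0] := by
  ext i j; fin_cases i <;> fin_cases j <;> norm_num [Matrix.mul_apply, Fin.sum_univ_two]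

theorem mul6_0 : !![(1:ℚ), 0; 0, 1] * !![(0:ℚ), 0; 0, 0] = !![(0:ℚ), 0; 0, 0] := by
  ext i j; fin_cases i <;> fin_cases j <;> norm_num [Matrix.mul_apply, Fin.sum_univ_two]

theorem mul6_1 : !![(1:ℚ), 0; 0, 1] * !![(0:ℚ), 0; 0, 1] = !![(0:ℚ), 0; 0, 1] := by
  ext i j; fin_cases i <;> fin_cases j <;> norm_num [Matrix.mul_apply, Fin.sum_univ_two]

theorem mul6_2 : !![(1:ℚ), 0; 0, 1] * !![(0:ℚ), 0; 1, 0] = !![(0:ℚ), 0; 1, 0] := by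
  ext i j; fin_cases i <;> fin_cases j <;> norm_num [Matrix.mul_apply, Fin.sum_univ_two]

theorem mul6_3 : !![(1:ℚ), 0; 0, 1] * !![(0:ℚ), 0; 1, 1] = !![(0:ℚ), 0; 1, 1] := by
  ext i j; fin_cases i <;> fin_cases j <;> norm_num [Matrix.mul_apply, Fin.sum_univ_two]

theorem mul6_4 : !![(1:ℚ), 0; 0, 1] * !![(0:ℚ), 1; 0, 0] = !![(0:ℚ), 1; 0, 0] := by
  ext i j; fin_cases i <;> fin_cases j <;> norm_num [Matrix.mul_apply, Fin.sum_univ_two]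

theorem mul6_5 : !![(1:ℚ), 0; 0, 1] * !![(1:ℚ), 0; 0, 0] = !![(1:ℚ), 0; 0, 0] := by
  ext i j; fin_cases i <;> fin_cases j <;> norm_num [Matrix.mul_apply, Fin.sum_univ_two]

theorem mul6_6 : !![(1:ℚ), 0; 0, 1] * !![(1:ℚ), 0; 0, 1] = !![(1:ℚ), 0; 0, 1] := by
  ext i j; fin_cases i <;> fin_cases j <;> norm_num [Matrix.mul_apply, Fin.sum_univ_two]

theorem mul6_7 : !![(1:ℚ), 0; 0, 1] * !![(1:ℚ), 1; 0, 0] = !![(1:ℚ), 1; 0, 0] := by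
  ext i j; fin_cases i <;> fin_cases j <;> norm_num [Matrix.mul_apply, Fin.sum_univ_two]

theorem mul7_0 : !![(1:ℚ), 1; 0, 0] * !![(0:ℚ), 0; 0, 0] = !![(0:ℚ), 0; 0, 0] := by
  ext i j; fin_cases i <;> fin_cases j <;> norm_num [Matrix.mul_apply, Fin.sum_univ_two]

theorem mul7_1 : !![(1:ℚ), 1; 0, 0] * !![(0:ℚ), 0; 0, 1] = !![(0:ℚ), 1; 0, 0] := by
  ext i j; fin_cases i <;> fin_cases j <;> norm_num [Matrix.mul_apply, Fin.sum_univ_two]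

theorem mul7_2 : !![(1:ℚ), 1; 0, 0] * !![(0:ℚ), 0; 1, 0] = !![(1:ℚ), 0; 0, 0] := by
  ext i j; fin_cases i <;> fin_cases j <;> norm_num [Matrix.mul_apply, Fin.sum_univ_two]

theorem mul7_3 : !![(1:ℚ), 1; 0, 0] * !![(0:ℚ), 0; 1, 1] = !![(1:ℚ), 1; 0, 0] := by
  ext i j; fin_cases i <;> fin_cases j <;> norm_num [Matrix.mul_apply, Fin.sum_univ_two]

theorem mul7_4 : !![(1:ℚ), 1; 0, 0] * !![(0:ℚ), 1; 0, 0] = !![(0:ℚ), 1; 0, 0] := by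
  ext i j; fin_cases i <;> fin_cases j <;> norm_num [Matrix.mul_apply, Fin.sum_univ_two]

theorem mul7_5 : !![(1:ℚ), 1; 0, 0] * !![(1:ℚ), 0; 0, 0] = !![(1:ℚ), 0; 0, 0] := by
  ext i j; fin_cases i <;> fin_cases j <;> norm_num [Matrix.mul_apply, Fin.sum_univ_two]

theorem mul7_6 : !![(1:ℚ), 1; 0, 0] * !![(1:ℚ), 0; 0, 1] = !![(1:ℚ), 1; 0, 0] := by
  ext i j; fin_cases i <;> fin_cases j <;> norm_num [Matrix.mul_apply, Fin.sum_univ_two]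

theorem mul7_7 : !![(1:ℚ), 1; 0, 0] * !![(1:ℚ), 1; 0, 0] = !![(1:ℚ), 1; 0, 0] := by
  ext i j; fin_cases i <;> fin_cases j <;> norm_num [Matrix.mul_apply, Fin.sum_univ_two]

theorem sig0 : σ !![(0:ℚ), 0; 0, 0] = (!![(0:ℚ), 0; 0, 0], !![(0:ℚ), 0; 0, 0]) := by
  unfold σ; rw [if_neg (mne 0 0 (by norm_num)), if_neg (mne 0 1 (by norm_num)), if_neg (mne 1 0 (by norm_num)), if_neg (mne 1 1 (by norm_num)), if_neg (mne 0 0 (by norm_num))]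

theorem sig1 : σ !![(1:ℚ), 0; 0, 0] = (!![(1:ℚ), 1; 0, 0], !![(0:ℚ), 0; 0, 1]) := by
  unfold σ; rw [if_pos rfl]

theorem sig2 : σ !![(0:ℚ), 1; 0, 0] = (!![(0:ℚ), 1; 0, 0], !![(0:ℚ), 0; 1, 1]) := by
  unfold σ; rw [if_neg (mne 0 0 (by norm_num)), if_pos rfl]

theorem sig3 : σ !![(0:ℚ), 0; 1, 0] = (!![(0:ℚ), 0; 1, 1], !![(0:ℚ), 1; 0, 0]) := by
  unfold σ; rw [if_neg (mne 0 0 (by norm_num)), if_neg (mne 0 1 (by norm_num)), if_pos rfl]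

theorem sig4 : σ !![(0:ℚ), 0; 0, 1] = (!![(0:ℚ), 0; 0, 1], !![(1:ℚ), 1; 0, 0]) := by
  unfold σ; rw [if_neg (mne 0 0 (by norm_num)), if_neg (mne 0 1 (by norm_num)), if_neg (mne 1 0 (by norm_num)), if_pos rfl]

theorem sig5 : σ !![(1:ℚ), 0; 0, 1] = (!![(1:ℚ), 0; 0, 1], !![(1:ℚ), 0; 0, 1]) := by
  unfold σ; rw [if_neg (mne 1 1 (by norm_num)), if_neg (mne 0 0 (by norm_num)), if_neg (mne 0 0 (by norm_num)), if_neg (mne 0 0 (by norm_num)), if_pos rfl]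

theorem pi0 : π (!![(1:ℚ), 0; 0, 1], !![(1:ℚ), 0; 0, 1]) = !![(1:ℚ), 0; 0, 1] := by
  unfold π; rw [if_neg (pne1 0 1 (by norm_num)), if_neg (pne1 0 0 (by norm_num)), if_neg (pne1 0 0 (by norm_num)), if_neg (pne1 0 0 (by norm_num)), if_pos rfl]

theorem pi1 : π (!![(0:ℚ), 1; 0, 0], !![(0:ℚ), 0; 1, 1]) = !![(0:ℚ), 1; 0, 0] := by
  unfold π; rw [if_neg (pne1 0 0 (by norm_num)), if_pos rfl]

theorem pi2 : π (!![(0:ℚ), 0; 1, 1], !![(0:ℚ), 1; 0, 0]) = !![(0:ℚ), 0; 1, 0] := by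
  unfold π; rw [if_neg (pne1 0 0 (by norm_num)), if_neg (pne1 0 1 (by norm_num)), if_pos rfl]

theorem pi3 : π (!![(0:ℚ), 0; 0, 1], !![(1:ℚ), 1; 0, 0]) = !![(0:ℚ), 0; 0, 1] := by
  unfold π; rw [if_neg (pne1 0 0 (by norm_num)), if_neg (pne1 0 1 (by norm_num)), if_neg (pne1 1 0 (by norm_num)), if_pos rfl]

theorem pi4 : π (!![(1:ℚ), 1; 0, 0], !![(0:ℚ), 0; 0, 1]) = !![(1:ℚ), 0; 0, 0] := by
  unfold π; rw [if_pos rfl]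

theorem pi5 : π (!![(0:ℚ), 0; 1, 1], !![(0:ℚ), 0; 0, 0]) = !![(0:ℚ), 0; 0, 0] := by
  unfold π; rw [if_neg (pne1 0 0 (by norm_num)), if_neg (pne1 0 1 (by norm_num)), if_neg (pne2 0 1 (by norm_num)), if_neg (pne1 1 0 (by norm_num)), if_neg (pne1 0 0 (by norm_num))]

theorem pi6 : π (!![(0:ℚ), 0; 0, 1], !![(0:ℚ), 0; 0, 0]) = !![(0:ℚ), 0; 0, 0] := by
  unfold π; rw [if_neg (pne1 0 0 (by norm_num)), if_neg (pne1 0 1 (by norm_num)), if_neg (pne1 1 0 (by norm_num)), if_neg (pne2 0 0 (by norm_num)), if_neg (pne1 0 0 (by norm_num))]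

theorem pi7 : π (!![(0:ℚ), 0; 0, 0], !![(0:ℚ), 0; 0, 0]) = !![(0:ℚ), 0; 0, 0] := by
  unfold π; rw [if_neg (pne1 0 0 (by norm_num)), if_neg (pne1 0 1 (by norm_num)), if_neg (pne1 1 0 (by norm_num)), if_neg (pne1 1 1 (by norm_num)), if_neg (pne1 0 0 (by norm_num))]

theorem pi8 : π (!![(0:ℚ), 0; 0, 0], !![(1:ℚ), 1; 0, 0]) = !![(0:ℚ), 0; 0, 0] := by
  unfold π; rw [if_neg (pne1 0 0 (by norm_num)), if_neg (pne1 0 1 (by norm_num)), if_neg (pne1 1 0 (by norm_num)), if_neg (pne1 1 1 (by norm_num)), if_neg (pne1 0 0 (by norm_num))]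

theorem pi9 : π (!![(0:ℚ), 0; 0, 0], !![(0:ℚ), 1; 0, 0]) = !![(0:ℚ), 0; 0, 0] := by
  unfold π; rw [if_neg (pne1 0 0 (by norm_num)), if_neg (pne1 0 1 (by norm_num)), if_neg (pne1 1 0 (by norm_num)), if_neg (pne1 1 1 (by norm_num)), if_neg (pne1 0 0 (by norm_num))]

theorem pi10 : π (!![(0:ℚ), 0; 0, 0], !![(0:ℚ), 0; 1, 1]) = !![(0:ℚ), 0; 0, 0] := by
  unfold π; rw [if_neg (pne1 0 0 (by norm_num)), if_neg (pne1 0 1 (by norm_num)), if_neg (pne1 1 0 (by norm_num)), if_neg (pne1 1 1 (by norm_num)), if_neg (pne1 0 0 (by norm_num))]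

theorem pi11 : π (!![(1:ℚ), 1; 0, 0], !![(0:ℚ), 0; 0, 0]) = !![(0:ℚ), 0; 0, 0] := by
  unfold π; rw [if_neg (pne2 1 1 (by norm_num)), if_neg (pne1 0 0 (by norm_num)), if_neg (pne1 0 0 (by norm_num)), if_neg (pne1 0 0 (by norm_num)), if_neg (pne1 0 1 (by norm_num))]

theorem pi12 : π (!![(0:ℚ), 1; 0, 0], !![(0:ℚ), 0; 0, 0]) = !![(0:ℚ), 0; 0, 0] := by
  unfold π; rw [if_neg (pne1 0 0 (by norm_num)), if_neg (pne2 1 0 (by norm_num)), if_neg (pne1 0 1 (by norm_num)), if_neg (pne1 0 1 (by norm_num)), if_neg (pne1 0 0 (by norm_num))]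

theorem pi13 : π (!![(0:ℚ), 0; 0, 0], !![(0:ℚ), 0; 0, 1]) = !![(0:ℚ), 0; 0, 0] := by
  unfold π; rw [if_neg (pne1 0 0 (by norm_num)), if_neg (pne1 0 1 (by norm_num)), if_neg (pne1 1 0 (by norm_num)), if_neg (pne1 1 1 (by norm_num)), if_neg (pne1 0 0 (by norm_num))]

theorem memA : ∀ x ∈ B21, (σ x).1 ∈ A21 ∧ (σ x).2 ∈ A21 := by
  intro x hx
  simp only [B21, Set.mem_insert_iff, Set.mem_singleton_iff, std00, std01, std10, std11,
    zero_fin_two, Matrix.one_fin_two] at hx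
  rcases hx with rfl | rfl | rfl | rfl | rfl | rfl <;>
    (simp only [sig0, sig1, sig2, sig3, sig4, sig5, fst_mk, snd_mk]
     simp only [A21, Set.mem_insert_iff, Set.mem_singleton_iff,
       zero_fin_two', one_fin_two', eq_self_iff_true, or_true, true_or, and_self])

set_option maxHeartbeats 1000000 in
theorem key : ∀ x ∈ B21, ∀ p ∈ T,
    ((σ x).1 * p.1, (σ x).2 * p.2) ∈ T ∧
      π ((σ x).1 * p.1, (σ x).2 * p.2) = x * π p := by
  intro x hx p hp
  simp only [B21, Set.mem_insert_iff, Set.mem_singleton_iff, std00, std01, std10, std11,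
    zero_fin_two, Matrix.one_fin_two] at hx
  simp only [T, Set.mem_insert_iff, Set.mem_singleton_iff] at hp
  rcases hx with rfl | rfl | rfl | rfl | rfl | rfl <;>
    rcases hp with rfl | rfl | rfl | rfl | rfl | rfl | rfl | rfl | rfl | rfl | rfl | rfl | rfl | rfl <;>
    simp only [fst_mk, snd_mk, sig0, sig1, sig2, sig3, sig4, sig5, mul0_0, mul0_1, mul0_2, mul0_3, mul0_4, mul0_5, mul0_6, mul0_7, mul1_0, mul1_1, mul1_2, mul1_3, mul1_4, mul1_5, mul1_6, mul1_7, mul2_0, mul2_1, mul2_2, mul2_3, mul2_4, mul2_5, mul2_6, mul2_7, mul3_0, mul3_1, mul3_2, mul3_3, mul3_4, mul3_5, mul3_6, mul3_7, mul4_0, mul4_1, mul4_2, mul4_3, mul4_4, mul4_5, mul4_6, mul4_7, mul5_0, mul5_1, mul5_2, mul5_3, mul5_4, mul5_5, mul5_6, mul5_7, mul6_0, mul6_1, mul6_2, mul6_3, mul6_4, mul6_5, mul6_6, mul6_7, mul7_0, mul7_1, mul7_2, mul7_3, mul7_4, mul7_5, mul7_6, mul7_7, pi0, pi1, pi2, pi3,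 pi4, pi5, pi6, pi7, pi8, pi9, pi10, pi11, pi12, pi13, T, Set.mem_insert_iff, Set.mem_singleton_iff, Prod.mk.injEq, eq_self_iff_true, and_self, and_true, true_and, or_true, true_or]

theorem main : ∀ l : List M, (∀ x ∈ l, x ∈ B21) →
    (((l.map (fun x => (σ x).1)).prod, (l.map (fun x => (σ x).2)).prod) ∈ T ∧
      π ((l.map (fun x => (σ x).1)).prod, (l.map (fun x => (σ x).2)).prod) = l.prod) := by
  intro l
  induction l with
  | nil =>
    intro _
    constructor
    · simp only [List.map_nil, List.prod_nil, Matrix.one_fin_two, T,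
        Set.mem_insert_iff, Set.mem_singleton_iff, Prod.mk.injEq, eq_self_iff_true,
        and_self, or_true, true_or]
    · simp only [List.map_nil, List.prod_nil, Matrix.one_fin_two, pi0]
  | cons x l ih =>
    intro hmem
    have hx : x ∈ B21 := hmem x (by simp)
    obtain ⟨hT, hπ⟩ := ih (fun y hy => hmem y (by simp [hy]))
    obtain ⟨hT', hπ'⟩ := key x hx _ hT
    simp only [List.map_cons, List.prod_cons]
    exact ⟨hT', by rw [hπ']; rw [hπ]⟩

end B21A21Aux

/-- Every identity satisfied by `A₂¹` is satisfied by `B₂¹`: the variety generated by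
`B₂¹` is contained in the variety generated by `A₂¹`. -/
theorem B21_variety_le_A21_variety :
    ∀ u v : List ℕ,
      (∀ φ : ℕ → Matrix (Fin 2) (Fin 2) ℚ, (∀ i, φ i ∈ A21) →
        (u.map φ).prod = (v.map φ).prod) →
      (∀ ψ : ℕ → Matrix (Fin 2) (Fin 2) ℚ, (∀ i, ψ i ∈ B21) →
        (u.map ψ).prod = (v.map ψ).prod) := by
  intro u v h ψ hψ
  classical
  have h1 := h (fun i => (B21A21Aux.σ (ψ i)).1) (fun i => (B21A21Aux.memA (ψ i) (hψ i)).1)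
  have h2 := h (fun i => (B21A21Aux.σ (ψ i)).2) (fun i => (B21A21Aux.memA (ψ i) (hψ i)).2)
  have hu := B21A21Aux.main (u.map ψ) (by intro x hx; simp only [List.mem_map] at hx
                                          obtain ⟨i, _, rfl⟩ := hx; exact hψ i)
  have hv := B21A21Aux.main (v.map ψ) (by intro x hx; simp only [List.mem_map] at hx
                                          obtain ⟨i, _, rfl⟩ := hx; exact hψ i)
  rw [← hu.2, ← hv.2]
  simp only [List.map_map, Function.comp_def]
  rw [h1, h2]
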